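/- Let d ≥ 3 and d' ≥ d be natural numbers and let e : Fin d → EuclideanSpace ℂ (Fin d') be an orthonormal family of vectors. Set ψ := (1/√d)·Σ_{j ∈ Fin d} e_j. Then for every real number t with 0 ≤ t ≤ √((d−1)/d) there exist real phases θ_1, …, θ_{d−1} such that ⟪φ, ψ⟫ = t, where φ := (1/√(d−1))·Σ_{j=1}^{d−1} exp(i·θ_j)·e_j; that is, the phases may be chosen so that the inner product of φ with ψ is real and takes any prescribed value between 0 and √((d−1)/d). -/

import Mathlib

open Complex Finset

private lemma sum_parity (a b : ℂ) (k : ℕ) :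
    ∑ j ∈ Finset.range (2*k), (if Odd j then a else b) = k * (a + b) := by
  induction k with
  | zero => simp
  | succ k ih =>
    have h2 : 2*(k+1) = (2*k) + 1 + 1 := by ring
    have h3 : ¬ Odd (2*k) := by simp [Nat.odd_iff]
    have h4 : Odd (2*k+1) := ⟨k, by ring⟩
    rw [h2, Finset.sum_range_succ, Finset.sum_range_succ, ih, if_neg h3, if_pos h4]
    push_cast; ring

theorem stmt11 (d d' : ℕ) (hd : 3 ≤ d) (hd' : d ≤ d')
    (e : Fin d → EuclideanSpace ℂ (Fin d')) (he : Orthonormal ℂ e)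
    (t : ℝ) (ht0 : 0 ≤ t) (ht1 : t ≤ Real.sqrt (((d : ℝ) - 1) / d)) :
    ∃ θ : Fin d → ℝ,
      (inner ℂ
        ((1 / (Real.sqrt ((d : ℝ) - 1) : ℂ)) •
          ∑ j ∈ Finset.univ.filter (fun j : Fin d => j ≠ ⟨0, by omega⟩),
            Complex.exp (Complex.I * (θ j : ℂ)) • e j)
        ((1 / (Real.sqrt d : ℂ)) • ∑ j, e j) : ℂ) = (t : ℂ) := by
  have hd3 : (3:ℝ) ≤ (d:ℝ) := by exact_mod_cast hd
  have hd1 : (2:ℝ) ≤ (d:ℝ) - 1 := by linarith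
  have hs1pos : 0 < Real.sqrt ((d:ℝ)-1) := Real.sqrt_pos.mpr (by linarith)
  have hs2pos : 0 < Real.sqrt d := Real.sqrt_pos.mpr (by linarith)
  set s : ℝ := t * (Real.sqrt ((d:ℝ)-1) * Real.sqrt d) with hs_def
  have hs0 : 0 ≤ s := by positivity
  have hsle : s ≤ (d:ℝ) - 1 := by
    have h1 : Real.sqrt (((d:ℝ)-1)/d) * (Real.sqrt ((d:ℝ)-1) * Real.sqrt d) = (d:ℝ)-1 := by
      rw [Real.sqrt_div (by linarith : (0:ℝ) ≤ (d:ℝ)-1)]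
      rw [div_mul_eq_mul_div]
      have key : Real.sqrt ((d:ℝ)-1) * Real.sqrt ((d:ℝ)-1) = (d:ℝ)-1 :=
        Real.mul_self_sqrt (by linarith)
      field_simp
      linear_combination key
    calc s ≤ Real.sqrt (((d:ℝ)-1)/d) * (Real.sqrt ((d:ℝ)-1) * Real.sqrt d) := by
            exact mul_le_mul_of_nonneg_right ht1 (by positivity)
    _ = (d:ℝ)-1 := h1
  obtain ⟨g, hg⟩ : ∃ g : ℕ → ℝ,
      ∑ j ∈ Finset.univ.filter (fun j : Fin d => j ≠ (⟨0, by omega⟩ : Fin d)),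
        Complex.exp (-(Complex.I * ((g j.val : ℝ) : ℂ))) = (s : ℂ) := by
    rcases Nat.even_or_odd d with hpar | hpar
    · -- d even, d = 2k+2 with k ≥ 1
      obtain ⟨k, hk, hk1⟩ : ∃ k : ℕ, d = 2*k+2 ∧ 1 ≤ k := by
        obtain ⟨m, hm⟩ := hpar; exact ⟨m - 1, by omega, by omega⟩
      have hdr : (d:ℝ) = 2*k+2 := by rw [hk]; push_cast; ring
      set θ₀ := Real.arccos ((s-1) / (2*k)) with hθ₀
      have hkr : (1:ℝ) ≤ (k:ℝ) := by exact_mod_cast hk1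
      have hcos : Real.cos θ₀ = (s-1)/(2*k) := by
        apply Real.cos_arccos
        · rw [le_div_iff₀ (by linarith : (0:ℝ) < 2*k)]; linarith
        · rw [div_le_one (by linarith : (0:ℝ) < 2*k)]; linarith [hsle, hdr ▸ hsle]
      refine ⟨fun n => if n = 2*k+1 then 0 else if Odd n then θ₀ else -θ₀, ?_⟩
      set A := Complex.exp (-(Complex.I * (θ₀ : ℂ))) with hA
      set B := Complex.exp (-(Complex.I * ((-θ₀ : ℝ) : ℂ))) with hB
      have hA' : A = Complex.exp (-(θ₀:ℂ) * Complex.I) := by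
        rw [hA]; congr 1; ring
      have hB' : B = Complex.exp ((θ₀:ℂ) * Complex.I) := by
        rw [hB]; push_cast; congr 1; ring
      have hAB : A + B = 2 * (Real.cos θ₀ : ℂ) := by
        rw [hA', hB', add_comm, Complex.ofReal_cos, ← Complex.two_cos]
      rw [Finset.filter_ne', Finset.sum_erase_eq_sub (Finset.mem_univ _)]
      rw [Fin.sum_univ_eq_sum_range
        (fun n => Complex.exp (-(Complex.I *
          (((if n = 2*k+1 then 0 else if Odd n then θ₀ else -θ₀ : ℝ)) : ℂ))))]
      have h0 : (⟨0, by omega⟩ : Fin d).val = 0 := rfl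
      rw [show Finset.range d = Finset.range (2*k+1+1) from by rw [hk]]
      rw [Finset.sum_range_succ, Finset.sum_range_succ]
      have hsum : ∑ n ∈ Finset.range (2*k),
          Complex.exp (-(Complex.I *
            (((if n = 2*k+1 then 0 else if Odd n then θ₀ else -θ₀ : ℝ)) : ℂ)))
          = ∑ n ∈ Finset.range (2*k), (if Odd n then A else B) := by
        apply Finset.sum_congr rfl
        intro n hn
        have hn' : n ≠ 2*k+1 := by have := Finset.mem_range.mp hn; omega
        rw [if_neg hn']
        by_cases ho : Odd n
        · rw [if_pos ho, if_pos ho]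
        · rw [if_neg ho, if_neg ho]
      rw [hsum, sum_parity, hAB]
      have e1 : ¬ (2*k = 2*k+1) := by omega
      have e2 : ¬ Odd (2*k) := by simp [Nat.odd_iff]
      have e3 : (2*k+1 = 2*k+1) := rfl
      rw [if_neg e1, if_neg e2, if_pos e3]
      have e4 : ¬ ((0:ℕ) = 2*k+1) := by omega
      have e5 : ¬ Odd 0 := by simp
      simp only [h0, if_neg e4, if_neg e5]
      rw [← hB]
      have : (k:ℂ) * (2 * (Real.cos θ₀ : ℂ)) + 1 = (s:ℂ) := by
        have hr : (k:ℝ) * (2 * Real.cos θ₀) + 1 = s := by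
          rw [hcos]; field_simp; ring
        push_cast [← hr]; ring
      simp only [Complex.ofReal_zero, mul_zero, neg_zero, Complex.exp_zero]
      linear_combination this
    · -- d odd, d = 2k+1 with k ≥ 1
      obtain ⟨k, hk⟩ := hpar
      have hk1 : 1 ≤ k := by omega
      have hdr : (d:ℝ) = 2*k+1 := by rw [hk]; push_cast; ring
      set θ₀ := Real.arccos (s / (2*k)) with hθ₀
      have hkr : (1:ℝ) ≤ (k:ℝ) := by exact_mod_cast hk1
      have hcos : Real.cos θ₀ = s/(2*k) := by
        apply Real.cos_arccos
        · rw [le_div_iff₀ (by linarith : (0:ℝ) < 2*k)]; linarith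
        · rw [div_le_one (by linarith : (0:ℝ) < 2*k)]; linarith [hdr ▸ hsle]
      refine ⟨fun n => if Odd n then θ₀ else -θ₀, ?_⟩
      set A := Complex.exp (-(Complex.I * (θ₀ : ℂ))) with hA
      set B := Complex.exp (-(Complex.I * ((-θ₀ : ℝ) : ℂ))) with hB
      have hA' : A = Complex.exp (-(θ₀:ℂ) * Complex.I) := by
        rw [hA]; congr 1; ring
      have hB' : B = Complex.exp ((θ₀:ℂ) * Complex.I) := by
        rw [hB]; push_cast; congr 1; ring
      have hAB : A + B = 2 * (Real.cos θ₀ : ℂ) := by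
        rw [hA', hB', add_comm, Complex.ofReal_cos, ← Complex.two_cos]
      rw [Finset.filter_ne', Finset.sum_erase_eq_sub (Finset.mem_univ _)]
      rw [Fin.sum_univ_eq_sum_range
        (fun n => Complex.exp (-(Complex.I * (((if Odd n then θ₀ else -θ₀ : ℝ)) : ℂ))))]
      have h0 : (⟨0, by omega⟩ : Fin d).val = 0 := rfl
      rw [show Finset.range d = Finset.range (2*k+1) from by rw [hk]]
      rw [Finset.sum_range_succ]
      have hsum : ∑ n ∈ Finset.range (2*k),
          Complex.exp (-(Complex.I * (((if Odd n then θ₀ else -θ₀ : ℝ)) : ℂ)))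
          = ∑ n ∈ Finset.range (2*k), (if Odd n then A else B) := by
        apply Finset.sum_congr rfl
        intro n _
        by_cases ho : Odd n
        · rw [if_pos ho, if_pos ho]
        · rw [if_neg ho, if_neg ho]
      rw [hsum, sum_parity, hAB]
      have e2 : ¬ Odd (2*k) := by simp [Nat.odd_iff]
      have e5 : ¬ Odd 0 := by simp
      rw [if_neg e2]
      simp only [h0, if_neg e5]
      rw [← hB]
      have hr : (k:ℝ) * (2 * Real.cos θ₀) = s := by
        rw [hcos]; field_simp
      push_cast [← hr]
      ring
  refine ⟨fun j => g j.val, ?_⟩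
  rw [inner_smul_left, inner_smul_right, sum_inner]
  have hinner : ∀ j : Fin d, (inner ℂ (e j) (∑ k, e k) : ℂ) = 1 := by
    intro j
    rw [inner_sum]
    simp [orthonormal_iff_ite.mp he]
  have hconj : ∀ x : ℝ, (starRingEnd ℂ) (Complex.exp (Complex.I * (x:ℂ)))
      = Complex.exp (-(Complex.I * (x:ℂ))) := by
    intro x
    rw [← Complex.exp_conj]
    congr 1
    rw [map_mul, Complex.conj_I, Complex.conj_ofReal]
    ring
  simp only [inner_smul_left, hinner, mul_one, hconj]
  rw [hg]
  simp only [map_div₀, map_one, Complex.conj_ofReal]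
  rw [hs_def]
  have hz1 : ((Real.sqrt ((d:ℝ)-1) : ℝ) : ℂ) ≠ 0 := Complex.ofReal_ne_zero.mpr hs1pos.ne'
  have hz2 : ((Real.sqrt (d:ℝ) : ℝ) : ℂ) ≠ 0 := Complex.ofReal_ne_zero.mpr hs2pos.ne'
  push_cast
  field_simp
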